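/- Let p ≥ 5 be a prime, e ≥ 1 an integer, and A, B ∈ ℤ with p not dividing 4A³ + 27B². Then the number of primitive triples (X, Y, Z) ∈ (ℤ/p^eℤ)³ satisfying Y²·Z = X³ + A·X·Z² + B·Z³ equals p^(2(e−1)) times the number of nonzero triples (x, y, z) ∈ (ℤ/pℤ)³ satisfying y²·z = x³ + A·x·z² + B·z³. (This expresses that the projective curve over ℤ/p^eℤ has p^(e−1) times as many points as its reduction modulo p.) -/

import Mathlib

section aux
variable {p : ℕ}

/-- Solution set with primitivity expressed via `val` divisibility. -/
abbrev SolAux (p : ℕ) (A B : ℤ) (n : ℕ) : Type :=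
  {w : ZMod n × ZMod n × ZMod n //
    (¬ (p ∣ (ZMod.val w.1) ∧ p ∣ (ZMod.val w.2.1) ∧ p ∣ (ZMod.val w.2.2))) ∧
    w.2.1 ^ 2 * w.2.2 =
      w.1 ^ 3 + (A : ZMod n) * w.1 * w.2.2 ^ 2 + (B : ZMod n) * w.2.2 ^ 3}

lemma smooth_aux (hp : p.Prime) (hp5 : 5 ≤ p)
    (A B : ℤ) (hdisc : ¬ ((p : ℤ) ∣ 4 * A ^ 3 + 27 * B ^ 2))
    (x y z : ZMod p) (hnz : ¬ (x = 0 ∧ y = 0 ∧ z = 0)) :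
    ¬ (3 * x ^ 2 + (A : ZMod p) * z ^ 2 = 0 ∧ -(2 * y * z) = 0 ∧
       2 * (A : ZMod p) * x * z + 3 * (B : ZMod p) * z ^ 2 - y ^ 2 = 0) := by
  haveI : Fact p.Prime := ⟨hp⟩
  have h2 : (2 : ZMod p) ≠ 0 := by
    have : ((2 : ℕ) : ZMod p) ≠ 0 := by
      rw [Ne, ZMod.natCast_eq_zero_iff]
      intro h; have := Nat.le_of_dvd (by norm_num) h; omega
    simpa using this
  have h3 : (3 : ZMod p) ≠ 0 := by
    have : ((3 : ℕ) : ZMod p) ≠ 0 := by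
      rw [Ne, ZMod.natCast_eq_zero_iff]
      intro h; have := Nat.le_of_dvd (by norm_num) h; omega
    simpa using this
  rintro ⟨e1, e2, e3⟩
  have hyz : y * z = 0 := by
    have : (2 : ZMod p) * (y * z) = 0 := by linear_combination -e2
    rcases mul_eq_zero.mp this with h | h
    · exact absurd h h2
    · exact h
  by_cases hz : z = 0
  · subst hz
    have hx : x = 0 := by
      have : (3 : ZMod p) * x ^ 2 = 0 := by linear_combination e1
      rcases mul_eq_zero.mp this with h | h
      · exact absurd h h3
      · exact pow_eq_zero_iff (by norm_num) |>.mp h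
    have hy : y = 0 := by
      have : y ^ 2 = 0 := by linear_combination -e3
      exact pow_eq_zero_iff (by norm_num) |>.mp this
    exact hnz ⟨hx, hy, rfl⟩
  · have hy : y = 0 := by
      rcases mul_eq_zero.mp hyz with h | h
      · exact h
      · exact absurd h hz
    subst hy
    have key : ((4 * A ^ 3 + 27 * B ^ 2 : ℤ) : ZMod p) * z ^ 6 = 0 := by
      push_cast
      linear_combination (4*(3*x^2+(A:ZMod p)*z^2)^2 - 24*x^2*(3*x^2+(A:ZMod p)*z^2) + 36*x^4
        - 12*x*z*(2*(A:ZMod p)*x*z+3*(B:ZMod p)*z^2)) * e1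
        + (3*z^2*(2*(A:ZMod p)*x*z+3*(B:ZMod p)*z^2) + 36*x^3*z) * e3
    rcases mul_eq_zero.mp key with h | h
    · exact hdisc ((ZMod.intCast_zmod_eq_zero_iff_dvd _ _).mp h)
    · exact hz (pow_eq_zero_iff (by norm_num) |>.mp h)

lemma taylor_aux {R : Type*} [CommRing R] (P x y z u v w a b : R) (hP : P ^ 2 = 0) :
    (x + P*u) ^ 3 + a * (x + P*u) * (z + P*w) ^ 2 + b * (z + P*w) ^ 3 - (y + P*v) ^ 2 * (z + P*w)
      = (x ^ 3 + a * x * z ^ 2 + b * z ^ 3 - y ^ 2 * z)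
        + P*u * (3 * x ^ 2 + a * z ^ 2) + P*v * (-(2 * y * z))
        + P*w * (2 * a * x * z + 3 * b * z ^ 2 - y ^ 2) := by
  linear_combination (3*x*u^2 + a*(x*w^2 + 2*u*z*w) + 3*b*z*w^2 - 2*y*v*w - v^2*z
    + P*(u^3 + a*u*w^2 + b*w^3 - v^2*w)) * hP


lemma linear_count {p : ℕ} (hp : p.Prime) (n1 n2 n3 c : ZMod p)
    (hn : ¬ (n1 = 0 ∧ n2 = 0 ∧ n3 = 0)) :
    Nat.card {s : ZMod p × ZMod p × ZMod p //
      c + (s.1 * n1 + s.2.1 * n2 + s.2.2 * n3) = 0} = p ^ 2 := by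
  haveI : Fact p.Prime := ⟨hp⟩
  set L : (ZMod p × ZMod p × ZMod p) →+ ZMod p :=
    { toFun := fun s => s.1 * n1 + s.2.1 * n2 + s.2.2 * n3
      map_zero' := by simp
      map_add' := by intro s t; simp only [Prod.fst_add, Prod.snd_add]; ring } with hL
  have hLapp : ∀ s : ZMod p × ZMod p × ZMod p, L s = s.1 * n1 + s.2.1 * n2 + s.2.2 * n3 :=
    fun s => rfl
  have hsurj : Function.Surjective L := by
    intro a
    by_cases h1 : n1 = 0
    · by_cases h2 : n2 = 0
      · have h3 : n3 ≠ 0 := fun h3 => hn ⟨h1, h2, h3⟩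
        refine ⟨(0, 0, a * n3⁻¹), ?_⟩
        rw [hLapp]
        simp [mul_assoc, inv_mul_cancel₀ h3]
      · refine ⟨(0, a * n2⁻¹, 0), ?_⟩
        rw [hLapp]
        simp [mul_assoc, inv_mul_cancel₀ h2]
    · refine ⟨(a * n1⁻¹, 0, 0), ?_⟩
      rw [hLapp]
      simp [mul_assoc, inv_mul_cancel₀ h1]
  obtain ⟨s₀, hs₀⟩ := hsurj (-c)
  have e1 : {s : ZMod p × ZMod p × ZMod p //
      c + (s.1 * n1 + s.2.1 * n2 + s.2.2 * n3) = 0} ≃ L.ker := by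
    refine ⟨fun s => ⟨s.1 - s₀, ?_⟩, fun t => ⟨s₀ + t.1, ?_⟩, ?_, ?_⟩
    · have hs : L s.1 = -c := by
        have h := s.2; rw [← hLapp] at h; linear_combination h
      rw [AddMonoidHom.mem_ker, map_sub, hs, hs₀, sub_self]
    · have ht : L t.1 = 0 := t.2
      rw [← hLapp]; rw [map_add, hs₀, ht]; ring
    · intro s; apply Subtype.ext; simp
    · intro t; apply Subtype.ext; simp
  rw [Nat.card_congr e1]
  have hq : Nat.card ((ZMod p × ZMod p × ZMod p) ⧸ L.ker) = p := by
    rw [Nat.card_congr (QuotientAddGroup.quotientKerEquivOfSurjective L hsurj).toEquiv,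
      Nat.card_zmod]
  have htot : Nat.card (ZMod p × ZMod p × ZMod p) = p ^ 3 := by
    simp [Nat.card_prod, Nat.card_zmod]; ring
  have := AddSubgroup.card_eq_card_quotient_mul_card_addSubgroup L.ker
  rw [htot, hq] at this
  have hp3 : p ^ 3 = p * p ^ 2 := by ring
  rw [hp3] at this
  exact (Nat.eq_of_mul_eq_mul_left hp.pos this.symm)

lemma step_count (hp : p.Prime) (hp5 : 5 ≤ p) (A B : ℤ)
    (hdisc : ¬ ((p : ℤ) ∣ 4 * A ^ 3 + 27 * B ^ 2)) (k : ℕ) (hk : 1 ≤ k) :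
    Nat.card (SolAux p A B (p ^ (k + 1))) = p ^ 2 * Nat.card (SolAux p A B (p ^ k)) := by
  classical
  haveI : Fact p.Prime := ⟨hp⟩
  haveI : NeZero (p ^ (k + 1)) := ⟨pow_ne_zero _ hp.pos.ne'⟩
  haveI : NeZero (p ^ k) := ⟨pow_ne_zero _ hp.pos.ne'⟩
  set R := ZMod (p ^ (k + 1)) with hR
  set S := ZMod (p ^ k) with hS
  set K := ZMod p with hK
  letI : CommRing R := ZMod.commRing _
  letI : CommRing S := ZMod.commRing _
  letI : CommRing K := ZMod.commRing _
  let π : R →+* S := ZMod.castHom (pow_dvd_pow p (Nat.le_succ k)) S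
  let ρR : R →+* K := ZMod.castHom (dvd_pow_self p (Nat.succ_ne_zero k)) K
  let ρS : S →+* K := ZMod.castHom (dvd_pow_self p (by omega : k ≠ 0)) K
  have hπ_val : ∀ r : R, π r = ((r.val : ℕ) : S) := fun r => by
    rw [ZMod.castHom_apply, ← ZMod.natCast_val]
  have hρR_val : ∀ r : R, ρR r = ((r.val : ℕ) : K) := fun r => by
    rw [ZMod.castHom_apply, ← ZMod.natCast_val]
  have hρS_val : ∀ r : S, ρS r = ((r.val : ℕ) : K) := fun r => by
    rw [ZMod.castHom_apply, ← ZMod.natCast_val]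
  have hπρ : ∀ r : R, ρS (π r) = ρR r := fun r => by
    rw [← RingHom.comp_apply, ZMod.castHom_comp]
  have hdvdR : ∀ r : R, p ∣ r.val ↔ ρR r = 0 := fun r => by
    rw [hρR_val, ZMod.natCast_eq_zero_iff]
  have hdvdS : ∀ r : S, p ∣ r.val ↔ ρS r = 0 := fun r => by
    rw [hρS_val, ZMod.natCast_eq_zero_iff]
  -- the nilpotent `P` and the additive section `ι : K →+ R` of the kernel of `π`
  set P : R := (p : R) ^ k with hPdef
  have hP2 : P ^ 2 = 0 := by
    rw [hPdef, ← pow_mul, ← Nat.cast_pow, ZMod.natCast_eq_zero_iff]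
    exact pow_dvd_pow p (by omega)
  let ι : K →+ R := ZMod.lift p ⟨(AddMonoidHom.mulLeft P).comp (Int.castAddHom R), by
    show P * ((p : ℤ) : R) = 0
    push_cast
    rw [← pow_succ, ← Nat.cast_pow, ZMod.natCast_self]⟩
  have hι_int : ∀ m : ℤ, ι ((m : ℤ) : K) = P * ((m : ℤ) : R) := fun m => by
    exact ZMod.lift_coe p _ m
  have hι_nat : ∀ m : ℕ, ι ((m : ℕ) : K) = P * ((m : ℕ) : R) := fun m => by
    have := hι_int (m : ℤ)
    push_cast at this ⊢
    exact this
  have hι_val : ∀ t : K, ι t = P * ((t.val : ℕ) : R) := fun t => by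
    conv_lhs => rw [← ZMod.natCast_zmod_val t]
    exact hι_nat t.val
  have hι_inj : Function.Injective ι := by
    rw [injective_iff_map_eq_zero]
    intro t ht
    rw [hι_val] at ht
    have h0 : (((p ^ k * t.val : ℕ) : ℤ) : R) = 0 := by
      push_cast
      rw [← hPdef] at *
      exact_mod_cast ht
    rw [ZMod.intCast_zmod_eq_zero_iff_dvd] at h0
    push_cast at h0
    rw [pow_succ] at h0
    have hdvd : (p : ℤ) ∣ (t.val : ℤ) :=
      (mul_dvd_mul_iff_left (pow_ne_zero k (by exact_mod_cast hp.pos.ne' : (p : ℤ) ≠ 0))).mp h0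
    have : ((t.val : ℤ) : K) = 0 := (ZMod.intCast_zmod_eq_zero_iff_dvd _ _).mpr hdvd
    rwa [Int.cast_natCast, ZMod.natCast_zmod_val] at this
  have hker : ∀ r : R, π r = 0 → ∃ t : K, ι t = r := by
    intro r hr
    rw [hπ_val, ZMod.natCast_eq_zero_iff] at hr
    obtain ⟨m, hm⟩ := hr
    refine ⟨((m : ℕ) : K), ?_⟩
    rw [hι_nat, hPdef, ← Nat.cast_pow, ← Nat.cast_mul, ← hm, ZMod.natCast_zmod_val]
  have hπι : ∀ t : K, π (ι t) = 0 := fun t => by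
    rw [hι_val, map_mul, map_pow, map_natCast, ← Nat.cast_pow, ZMod.natCast_self, zero_mul]
  have hι_mulρ : ∀ (t : K) (r : R), ι t * r = ι (t * ρR r) := by
    intro t r
    have h1 : t * ρR r = ((t.val * r.val : ℕ) : K) := by
      conv_lhs => rw [← ZMod.natCast_zmod_val t, hρR_val r]
      push_cast
      ring
    rw [h1, hι_nat, hι_val]
    push_cast
    conv_lhs => rw [← ZMod.natCast_zmod_val r]
    ring
  -- the reduction map between solution sets
  let Φ : SolAux p A B (p ^ (k + 1)) → SolAux p A B (p ^ k) := fun w =>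
    ⟨(π w.1.1, π w.1.2.1, π w.1.2.2), by
      constructor
      · rintro ⟨h1, h2, h3⟩
        refine w.2.1 ⟨?_, ?_, ?_⟩ <;> rw [hdvdR, ← hπρ]
        · exact (hdvdS _).mp h1
        · exact (hdvdS _).mp h2
        · exact (hdvdS _).mp h3
      · have h := w.2.2
        have := congrArg π h
        simpa only [map_add, map_mul, map_pow, map_intCast] using this⟩
  -- each fiber of `Φ` has cardinality `p ^ 2`
  have key : ∀ v : SolAux p A B (p ^ k),
      Nat.card {w : SolAux p A B (p ^ (k + 1)) // Φ w = v} = p ^ 2 := by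
    intro v
    -- a chosen lift of `v`
    set x₀ : R := ((v.1.1.val : ℕ) : R) with hx₀
    set y₀ : R := ((v.1.2.1.val : ℕ) : R) with hy₀
    set z₀ : R := ((v.1.2.2.val : ℕ) : R) with hz₀
    have hπx : π x₀ = v.1.1 := by rw [hx₀, map_natCast, ZMod.natCast_zmod_val]
    have hπy : π y₀ = v.1.2.1 := by rw [hy₀, map_natCast, ZMod.natCast_zmod_val]
    have hπz : π z₀ = v.1.2.2 := by rw [hz₀, map_natCast, ZMod.natCast_zmod_val]
    -- the reduction of `v` modulo `p`
    set a : K := ρS v.1.1 with ha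
    set b : K := ρS v.1.2.1 with hb
    set c0 : K := ρS v.1.2.2 with hc0
    have hρx : ρR x₀ = a := by rw [← hπρ, hπx]
    have hρy : ρR y₀ = b := by rw [← hπρ, hπy]
    have hρz : ρR z₀ = c0 := by rw [← hπρ, hπz]
    have hnz : ¬ (a = 0 ∧ b = 0 ∧ c0 = 0) := by
      rintro ⟨h1, h2, h3⟩
      exact v.2.1 ⟨(hdvdS _).mpr h1, (hdvdS _).mpr h2, (hdvdS _).mpr h3⟩
    -- the gradient of the defining cubic at the reduction of `v`
    set g1 : K := 3 * a ^ 2 + (A : K) * c0 ^ 2 with hg1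
    set g2 : K := -(2 * b * c0) with hg2
    set g3 : K := 2 * (A : K) * a * c0 + 3 * (B : K) * c0 ^ 2 - b ^ 2 with hg3
    have hg : ¬ (g1 = 0 ∧ g2 = 0 ∧ g3 = 0) := smooth_aux hp hp5 A B hdisc a b c0 hnz
    have hρg1 : ρR (3 * x₀ ^ 2 + (A : R) * z₀ ^ 2) = g1 := by
      rw [hg1]
      push_cast [map_add, map_mul, map_pow, map_intCast, map_ofNat, hρx, hρz]
      ring
    have hρg2 : ρR (-(2 * y₀ * z₀)) = g2 := by
      rw [hg2]
      push_cast [map_neg, map_mul, map_ofNat, hρy, hρz]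
      ring
    have hρg3 : ρR (2 * (A : R) * x₀ * z₀ + 3 * (B : R) * z₀ ^ 2 - y₀ ^ 2) = g3 := by
      rw [hg3]
      push_cast [map_sub, map_add, map_mul, map_pow, map_intCast, map_ofNat, hρx, hρy, hρz]
      ring
    -- the value of the cubic at the chosen lift lies in the kernel of `π`
    have hπF : π (x₀ ^ 3 + (A : R) * x₀ * z₀ ^ 2 + (B : R) * z₀ ^ 3 - y₀ ^ 2 * z₀) = 0 := by
      simp only [map_sub, map_add, map_mul, map_pow, map_intCast, hπx, hπy, hπz]
      linear_combination (-(v.2.2))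
    obtain ⟨c, hc⟩ := hker _ hπF
    -- the Taylor-type identity
    have hFgen : ∀ s1 s2 s3 : K,
        (x₀ + ι s1) ^ 3 + (A : R) * (x₀ + ι s1) * (z₀ + ι s3) ^ 2
            + (B : R) * (z₀ + ι s3) ^ 3 - (y₀ + ι s2) ^ 2 * (z₀ + ι s3)
          = ι (c + (s1 * g1 + s2 * g2 + s3 * g3)) := by
      intro s1 s2 s3
      rw [hι_val s1, hι_val s2, hι_val s3,
        taylor_aux P x₀ y₀ z₀ _ _ _ (A : R) (B : R) hP2,
        ← hι_val s1, ← hι_val s2, ← hι_val s3,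
        hι_mulρ s1, hι_mulρ s2, hι_mulρ s3, hρg1, hρg2, hρg3, ← hc,
        ← map_add, ← map_add, ← map_add]
      exact congrArg ι (by ring)
    -- identify the fiber with an affine linear subspace of `K³`
    let T := {w : R × R × R //
      (π w.1 = v.1.1 ∧ π w.2.1 = v.1.2.1 ∧ π w.2.2 = v.1.2.2) ∧
      w.2.1 ^ 2 * w.2.2 = w.1 ^ 3 + (A : R) * w.1 * w.2.2 ^ 2 + (B : R) * w.2.2 ^ 3}
    have e1 : {w : SolAux p A B (p ^ (k + 1)) // Φ w = v} ≃ T := by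
      refine ⟨fun u => ⟨u.1.1, ⟨?_, u.1.2.2⟩⟩, fun t =>
        ⟨⟨t.1, ⟨?_, t.2.2⟩⟩, ?_⟩, fun u => ?_, fun t => ?_⟩
      · have h := congrArg Subtype.val u.2
        exact ⟨congrArg (fun q => q.1) h, congrArg (fun q => q.2.1) h,
          congrArg (fun q => q.2.2) h⟩
      · rintro ⟨h1, h2, h3⟩
        refine v.2.1 ⟨?_, ?_, ?_⟩ <;> rw [hdvdS]
        · rw [← t.2.1.1, hπρ, ← hdvdR]; exact h1
        · rw [← t.2.1.2.1, hπρ, ← hdvdR]; exact h2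
        · rw [← t.2.1.2.2, hπρ, ← hdvdR]; exact h3
      · exact Subtype.ext (Prod.ext t.2.1.1 (Prod.ext t.2.1.2.1 t.2.1.2.2))
      · exact Subtype.ext rfl
      · exact Subtype.ext rfl
    let f : {s : K × K × K // c + (s.1 * g1 + s.2.1 * g2 + s.2.2 * g3) = 0} → T := fun s =>
      ⟨(x₀ + ι s.1.1, y₀ + ι s.1.2.1, z₀ + ι s.1.2.2), by
        refine ⟨⟨?_, ?_, ?_⟩, ?_⟩
        · rw [map_add, hπι, add_zero, hπx]
        · rw [map_add, hπι, add_zero, hπy]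
        · rw [map_add, hπι, add_zero, hπz]
        · have h := hFgen s.1.1 s.1.2.1 s.1.2.2
          rw [s.2, map_zero] at h
          linear_combination (-h)⟩
    have hf : Function.Bijective f := by
      constructor
      · intro s s' h
        have h' := congrArg Subtype.val h
        rw [Prod.ext_iff, Prod.ext_iff] at h'
        apply Subtype.ext
        refine Prod.ext (hι_inj (add_left_cancel h'.1))
          (Prod.ext (hι_inj (add_left_cancel h'.2.1)) (hι_inj (add_left_cancel h'.2.2)))
      · rintro ⟨⟨wx, wy, wz⟩, ⟨⟨hw1, hw2, hw3⟩, hweq⟩⟩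
        obtain ⟨t1, ht1⟩ := hker (wx - x₀) (by rw [map_sub, hw1, hπx, sub_self])
        obtain ⟨t2, ht2⟩ := hker (wy - y₀) (by rw [map_sub, hw2, hπy, sub_self])
        obtain ⟨t3, ht3⟩ := hker (wz - z₀) (by rw [map_sub, hw3, hπz, sub_self])
        have hwx : wx = x₀ + ι t1 := by rw [ht1]; ring
        have hwy : wy = y₀ + ι t2 := by rw [ht2]; ring
        have hwz : wz = z₀ + ι t3 := by rw [ht3]; ring
        have h := hFgen t1 t2 t3
        rw [← hwx, ← hwy, ← hwz] at h
        have h0 : ι (c + (t1 * g1 + t2 * g2 + t3 * g3)) = 0 := by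
          rw [← h]; linear_combination -hweq
        have hcond : c + (t1 * g1 + t2 * g2 + t3 * g3) = 0 :=
          hι_inj (by rw [h0, map_zero])
        refine ⟨⟨(t1, t2, t3), hcond⟩, ?_⟩
        exact Subtype.ext (Prod.ext hwx.symm (Prod.ext hwy.symm hwz.symm))
    rw [Nat.card_congr e1, Nat.card_congr (Equiv.ofBijective f hf).symm]
    exact linear_count hp g1 g2 g3 c hg
  -- sum over the fibers
  haveI : Fintype (SolAux p A B (p ^ k)) := Fintype.ofFinite _
  haveI : Fintype (SolAux p A B (p ^ (k + 1))) := Fintype.ofFinite _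
  rw [Nat.card_congr (Equiv.sigmaFiberEquiv Φ).symm]
  rw [Nat.card_eq_fintype_card, Fintype.card_sigma]
  have : ∀ v : SolAux p A B (p ^ k),
      Fintype.card {w : SolAux p A B (p ^ (k + 1)) // Φ w = v} = p ^ 2 := by
    intro v
    rw [← Nat.card_eq_fintype_card]
    exact key v
  rw [Finset.sum_congr rfl (fun v _ => this v), Finset.sum_const, Finset.card_univ,
    smul_eq_mul, Nat.card_eq_fintype_card, mul_comm]

end aux

lemma span_iff_aux {p : ℕ} (hp : p.Prime) {k : ℕ} (hk : 1 ≤ k)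
    (w : ZMod (p ^ k) × ZMod (p ^ k) × ZMod (p ^ k)) :
    Ideal.span ({w.1, w.2.1, w.2.2} : Set (ZMod (p ^ k))) = ⊤ ↔
      ¬ (p ∣ (ZMod.val w.1) ∧ p ∣ (ZMod.val w.2.1) ∧ p ∣ (ZMod.val w.2.2)) := by
  haveI : Fact p.Prime := ⟨hp⟩
  haveI : NeZero (p ^ k) := ⟨pow_ne_zero _ hp.pos.ne'⟩
  let ρ : ZMod (p ^ k) →+* ZMod p := ZMod.castHom (dvd_pow_self p (by omega : k ≠ 0)) (ZMod p)
  have hdvd : ∀ r : ZMod (p ^ k), p ∣ r.val ↔ ρ r = 0 := fun r => by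
    rw [ZMod.castHom_apply, ← ZMod.natCast_val, ZMod.natCast_eq_zero_iff]
  constructor
  · intro hspan
    rintro ⟨h1, h2, h3⟩
    have hsub : ({w.1, w.2.1, w.2.2} : Set (ZMod (p ^ k))) ⊆ ↑(RingHom.ker ρ) := by
      intro x hx
      rcases hx with rfl | hx
      · exact (hdvd _).mp h1
      · rcases hx with rfl | hx
        · exact (hdvd _).mp h2
        · rcases hx with rfl
          exact (hdvd _).mp h3
    have hle : Ideal.span ({w.1, w.2.1, w.2.2} : Set (ZMod (p ^ k))) ≤ RingHom.ker ρ :=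
      Ideal.span_le.mpr hsub
    rw [hspan] at hle
    exact RingHom.ker_ne_top ρ (top_le_iff.mp hle)
  · intro h
    have hunit : ∀ x : ZMod (p ^ k), ¬ p ∣ x.val → IsUnit x := by
      intro x hx
      rw [← ZMod.natCast_zmod_val x, ZMod.isUnit_iff_coprime]
      rw [Nat.coprime_pow_right_iff hk]
      exact Nat.coprime_comm.mp (hp.coprime_iff_not_dvd.mpr hx)
    rw [not_and_or, not_and_or] at h
    rcases h with h | h | h
    · exact Ideal.eq_top_of_isUnit_mem _ (Ideal.subset_span (by simp)) (hunit _ h)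
    · exact Ideal.eq_top_of_isUnit_mem _ (Ideal.subset_span (by simp)) (hunit _ h)
    · exact Ideal.eq_top_of_isUnit_mem _ (Ideal.subset_span (by simp)) (hunit _ h)

theorem card_primitive_triples_eq_pow_mul_card_reduction
    {p : ℕ} (hp : p.Prime) (hp5 : 5 ≤ p) {e : ℕ} (he : 1 ≤ e)
    (A B : ℤ) (hdisc : ¬ ((p : ℤ) ∣ 4 * A ^ 3 + 27 * B ^ 2)) :
    Nat.card {v : ZMod (p ^ e) × ZMod (p ^ e) × ZMod (p ^ e) //
        Ideal.span ({v.1, v.2.1, v.2.2} : Set (ZMod (p ^ e))) = ⊤ ∧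
        v.2.1 ^ 2 * v.2.2 =
          v.1 ^ 3 + (A : ZMod (p ^ e)) * v.1 * v.2.2 ^ 2 +
            (B : ZMod (p ^ e)) * v.2.2 ^ 3} =
      p ^ (2 * (e - 1)) *
        Nat.card {w : ZMod p × ZMod p × ZMod p //
          w ≠ 0 ∧
          w.2.1 ^ 2 * w.2.2 =
            w.1 ^ 3 + (A : ZMod p) * w.1 * w.2.2 ^ 2 + (B : ZMod p) * w.2.2 ^ 3} := by
  haveI : Fact p.Prime := ⟨hp⟩
  haveI : NeZero p := ⟨hp.pos.ne'⟩
  have hL : Nat.card {v : ZMod (p ^ e) × ZMod (p ^ e) × ZMod (p ^ e) //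
        Ideal.span ({v.1, v.2.1, v.2.2} : Set (ZMod (p ^ e))) = ⊤ ∧
        v.2.1 ^ 2 * v.2.2 =
          v.1 ^ 3 + (A : ZMod (p ^ e)) * v.1 * v.2.2 ^ 2 +
            (B : ZMod (p ^ e)) * v.2.2 ^ 3} = Nat.card (SolAux p A B (p ^ e)) :=
    Nat.card_congr (Equiv.subtypeEquivRight fun w =>
      and_congr_left' (span_iff_aux hp he w))
  have hvz : ∀ x : ZMod p, p ∣ x.val ↔ x = 0 := by
    intro x
    constructor
    · intro hx
      have hlt := ZMod.val_lt x
      have h0 : x.val = 0 := Nat.eq_zero_of_dvd_of_lt hx hlt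
      exact (ZMod.val_eq_zero x).mp h0
    · rintro rfl
      simp [ZMod.val_zero]
  have hR : Nat.card {w : ZMod p × ZMod p × ZMod p //
          w ≠ 0 ∧
          w.2.1 ^ 2 * w.2.2 =
            w.1 ^ 3 + (A : ZMod p) * w.1 * w.2.2 ^ 2 + (B : ZMod p) * w.2.2 ^ 3}
        = Nat.card (SolAux p A B p) := by
    refine Nat.card_congr (Equiv.subtypeEquivRight fun w => and_congr_left' ?_)
    rw [Ne, Prod.ext_iff, Prod.ext_iff]
    simp only [hvz, Prod.fst_zero, Prod.snd_zero]
  have h1 : Nat.card (SolAux p A B (p ^ 1)) = Nat.card (SolAux p A B p) := by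
    rw [pow_one]
  have main : ∀ m : ℕ, Nat.card (SolAux p A B (p ^ (m + 1)))
      = p ^ (2 * m) * Nat.card (SolAux p A B (p ^ 1)) := by
    intro m
    induction m with
    | zero => simp
    | succ n ih =>
      rw [step_count hp hp5 A B hdisc (n + 1) (by omega), ih]
      rw [← mul_assoc, ← pow_add]
      congr 2
      omega
  obtain ⟨m, rfl⟩ : ∃ m, e = m + 1 := ⟨e - 1, by omega⟩
  rw [hL, hR, ← h1, main m]
  norm_num
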